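/- arXiv:2210.15580 — 2 statements merged into one kernel-verified Lean document; each statement's English description precedes it below -/
import Mathlib

section
/- Let p : [0,∞) → (0,∞) be measurable with p real-valued, and define the kernel k₀(t,s) = √(p(t))√(p(s)) e^{-t} e^{-s} I_0(2√(st)) on [0,∞)². If k₀ is square-integrable, then the integral operator Q on L²[0,∞) with kernel k₀ is a positive operator: ⟨Qf, f⟩ ≥ 0 for all f ∈ L²[0,∞). Consequently all eigenvalues of Q are nonnegative. -/
open MeasureTheory
open scoped Nat

noncomputable def besselI0 (z : ℝ) : ℝ :=
  ∑' m : ℕ, (z / 2) ^ (2 * m) / (m ! * m !)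

/-- The kernel k₀(t,s) = √p(t)√p(s) e^{-t} e^{-s} I₀(2√(st)). -/
noncomputable def kernelK0 (p : ℝ → ℝ) (t s : ℝ) : ℝ :=
  Real.sqrt (p t) * Real.sqrt (p s) * Real.exp (-t) * Real.exp (-s) *
    besselI0 (2 * Real.sqrt (s * t))

namespace KernelK0Aux

/-- The factor functions: `a m t = √p(t) e^{-t} t^m / m!`. -/
noncomputable def am (p : ℝ → ℝ) (m : ℕ) (t : ℝ) : ℝ :=
  Real.sqrt (p t) * Real.exp (-t) * t ^ m / m !

lemma am_nonneg (p : ℝ → ℝ) (m : ℕ) {t : ℝ} (ht : 0 ≤ t) : 0 ≤ am p m t := by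
  unfold am
  apply div_nonneg
  · exact mul_nonneg (mul_nonneg (Real.sqrt_nonneg _) (Real.exp_pos _).le) (pow_nonneg ht m)
  · exact Nat.cast_nonneg _

lemma am_measurable {p : ℝ → ℝ} (hp : Measurable p) (m : ℕ) : Measurable (am p m) := by
  unfold am
  exact ((hp.sqrt.mul (measurable_id.neg.exp)).mul (measurable_id.pow_const m)).div_const _

lemma summable_aux {x : ℝ} (hx : 0 ≤ x) :
    Summable (fun m : ℕ => x ^ m / ((m ! : ℝ) * (m ! : ℝ))) := by
  refine Summable.of_nonneg_of_le (fun m => by positivity) (fun m => ?_)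
    (Real.summable_pow_div_factorial x)
  apply div_le_div_of_nonneg_left (pow_nonneg hx m)
  · exact_mod_cast Nat.cast_pos.mpr m.factorial_pos
  · calc (m ! : ℝ) = (m ! : ℝ) * 1 := (mul_one _).symm
      _ ≤ (m ! : ℝ) * (m ! : ℝ) := by
          apply mul_le_mul_of_nonneg_left _ (Nat.cast_nonneg _)
          exact_mod_cast m.factorial_pos

lemma kernel_eq (p : ℝ → ℝ) {t s : ℝ} (ht : 0 ≤ t) (hs : 0 ≤ s) :
    kernelK0 p t s = ∑' m : ℕ, am p m t * am p m s := by
  have hst : (0 : ℝ) ≤ s * t := mul_nonneg hs ht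
  unfold kernelK0 besselI0
  have h1 : ∀ m : ℕ, (2 * Real.sqrt (s * t) / 2) ^ (2 * m) / ((m ! : ℝ) * (m ! : ℝ))
      = (s * t) ^ m / ((m ! : ℝ) * (m ! : ℝ)) := by
    intro m
    congr 1
    rw [mul_div_cancel_left₀ _ (two_ne_zero), pow_mul, Real.sq_sqrt hst]
  calc Real.sqrt (p t) * Real.sqrt (p s) * Real.exp (-t) * Real.exp (-s) *
        ∑' m : ℕ, (2 * Real.sqrt (s * t) / 2) ^ (2 * m) / ((m ! : ℝ) * (m ! : ℝ))
      = ∑' m : ℕ, Real.sqrt (p t) * Real.sqrt (p s) * Real.exp (-t) * Real.exp (-s) *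
        ((s * t) ^ m / ((m ! : ℝ) * (m ! : ℝ))) := by
        rw [tsum_congr h1, tsum_mul_left]
    _ = ∑' m : ℕ, am p m t * am p m s := by
        refine tsum_congr fun m => ?_
        unfold am
        have hm : ((m ! : ℝ)) ≠ 0 := by exact_mod_cast m.factorial_ne_zero
        field_simp
        rw [mul_pow]
        ring

lemma summable_prod (p : ℝ → ℝ) {t s : ℝ} (ht : 0 ≤ t) (hs : 0 ≤ s) :
    Summable (fun m : ℕ => am p m t * am p m s) := by
  have hst : (0 : ℝ) ≤ s * t := mul_nonneg hs ht
  have h := (summable_aux hst).mul_left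
    (Real.sqrt (p t) * Real.sqrt (p s) * Real.exp (-t) * Real.exp (-s))
  refine h.congr fun m => ?_
  unfold am
  have hm : ((m ! : ℝ)) ≠ 0 := by exact_mod_cast m.factorial_ne_zero
  field_simp
  rw [mul_pow]
  ring

lemma kernel_nonneg (p : ℝ → ℝ) {t s : ℝ} (ht : 0 ≤ t) (hs : 0 ≤ s) :
    0 ≤ kernelK0 p t s := by
  rw [kernel_eq p ht hs]
  exact tsum_nonneg fun m => mul_nonneg (am_nonneg p m ht) (am_nonneg p m hs)

/-- The main positivity computation for the double (product-measure) integral. -/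
lemma key (p f : ℝ → ℝ) (hp_meas : Measurable p)
    (hf : MemLp f 2 (volume.restrict (Set.Ici (0 : ℝ))))
    (hf_int : Integrable (fun ts : ℝ × ℝ => f ts.1 * f ts.2 * kernelK0 p ts.1 ts.2)
      ((volume.restrict (Set.Ici (0 : ℝ))).prod (volume.restrict (Set.Ici (0 : ℝ))))) :
    0 ≤ ∫ t in Set.Ici (0 : ℝ), ∫ s in Set.Ici (0 : ℝ), f t * f s * kernelK0 p t s := by
  set μ := volume.restrict (Set.Ici (0 : ℝ)) with hμ
  set ν := μ.prod μ with hν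
  -- a.e. membership
  have hmem : ∀ᵐ ts : ℝ × ℝ ∂ν, 0 ≤ ts.1 ∧ 0 ≤ ts.2 := by
    have : ν = (volume.prod volume).restrict (Set.Ici (0:ℝ) ×ˢ Set.Ici (0:ℝ)) :=
      Measure.prod_restrict _ _
    rw [this]
    filter_upwards [ae_restrict_mem (measurableSet_Ici.prod measurableSet_Ici)] with ts hts
    exact ⟨hts.1, hts.2⟩
  set F : ℕ → ℝ × ℝ → ℝ :=
    fun m ts => (f ts.1 * am p m ts.1) * (f ts.2 * am p m ts.2) with hF
  have hfa : ∀ m : ℕ, AEStronglyMeasurable (fun t => f t * am p m t) μ :=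
    fun m => hf.1.mul (am_measurable hp_meas m).aestronglyMeasurable
  have hFm : ∀ m, AEStronglyMeasurable (F m) ν := fun m =>
    ((hfa m).comp_fst).mul ((hfa m).comp_snd)
  -- pointwise identity for norms
  have hnorm : ∀ᵐ ts : ℝ × ℝ ∂ν,
      (∑' m : ℕ, (‖F m ts‖₊ : ENNReal))
        = (‖f ts.1 * f ts.2 * kernelK0 p ts.1 ts.2‖₊ : ENNReal) := by
    filter_upwards [hmem] with ts hts
    obtain ⟨ht, hs⟩ := hts
    have hsum : Summable (fun m : ℕ => am p m ts.1 * am p m ts.2) :=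
      summable_prod p ht hs
    have hnn : ∀ m : ℕ, ‖F m ts‖
        = (|f ts.1| * |f ts.2|) * (am p m ts.1 * am p m ts.2) := by
      intro m
      rw [hF]
      simp only [Real.norm_eq_abs, abs_mul,
        abs_of_nonneg (am_nonneg p m ht), abs_of_nonneg (am_nonneg p m hs)]
      ring
    have hsum2 : Summable (fun m : ℕ => ‖F m ts‖) := by
      refine ((hsum.mul_left (|f ts.1| * |f ts.2|)).congr fun m => ?_)
      rw [hnn m]
    calc (∑' m : ℕ, (‖F m ts‖₊ : ENNReal))
        = ∑' m : ℕ, ENNReal.ofReal ‖F m ts‖ := by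
          refine tsum_congr fun m => ?_
          rw [ofReal_norm, enorm_eq_nnnorm]
      _ = ENNReal.ofReal (∑' m : ℕ, ‖F m ts‖) :=
          (ENNReal.ofReal_tsum_of_nonneg (fun m => norm_nonneg _) hsum2).symm
      _ = (‖f ts.1 * f ts.2 * kernelK0 p ts.1 ts.2‖₊ : ENNReal) := by
          rw [← enorm_eq_nnnorm, ← ofReal_norm]
          congr 1
          rw [tsum_congr hnn, tsum_mul_left, ← kernel_eq p ht hs]
          rw [Real.norm_eq_abs, abs_mul, abs_mul,
            abs_of_nonneg (kernel_nonneg p ht hs)]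
    -- done
  have h_lt : ∑' m : ℕ, ∫⁻ ts, (‖F m ts‖₊ : ENNReal) ∂ν ≠ ⊤ := by
    simp only [← enorm_eq_nnnorm] at hnorm ⊢
    rw [← lintegral_tsum (fun m => (hFm m).enorm)]
    rw [lintegral_congr_ae hnorm]
    exact hf_int.2.ne
  have hmain : (0 : ℝ) ≤ ∫ ts : ℝ × ℝ, f ts.1 * f ts.2 * kernelK0 p ts.1 ts.2 ∂ν := by
    have h1 : ∫ ts : ℝ × ℝ, f ts.1 * f ts.2 * kernelK0 p ts.1 ts.2 ∂ν
        = ∫ ts : ℝ × ℝ, ∑' m : ℕ, F m ts ∂ν := by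
      refine integral_congr_ae ?_
      filter_upwards [hmem] with ts hts
      obtain ⟨ht, hs⟩ := hts
      rw [kernel_eq p ht hs, ← tsum_mul_left]
      refine tsum_congr fun m => ?_
      rw [hF]; ring
    have h2 : ∫ ts : ℝ × ℝ, ∑' m : ℕ, F m ts ∂ν = ∑' m : ℕ, ∫ ts, F m ts ∂ν :=
      integral_tsum hFm h_lt
    have h3 : ∀ m : ℕ, ∫ ts, F m ts ∂ν
        = (∫ t, f t * am p m t ∂μ) * (∫ t, f t * am p m t ∂μ) := fun m =>
      integral_prod_mul (fun t => f t * am p m t) (fun t => f t * am p m t)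
    rw [h1, h2]
    refine tsum_nonneg fun m => ?_
    rw [h3 m]
    exact mul_self_nonneg _
  have heq : ∫ t in Set.Ici (0 : ℝ), ∫ s in Set.Ici (0 : ℝ), f t * f s * kernelK0 p t s
      = ∫ ts : ℝ × ℝ, f ts.1 * f ts.2 * kernelK0 p ts.1 ts.2 ∂ν :=
    integral_integral hf_int
  rw [heq]
  exact hmain

end KernelK0Aux

/-- Positivity of the integral operator with kernel k₀, and nonnegativity of its
eigenvalues. -/
theorem kernelK0_pos_operator
    (p : ℝ → ℝ) (hp_meas : Measurable p) (hp_pos : ∀ t ∈ Set.Ici (0 : ℝ), 0 < p t)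
    (hk_sq : MemLp (fun ts : ℝ × ℝ => kernelK0 p ts.1 ts.2) 2
      ((volume.restrict (Set.Ici (0 : ℝ))).prod (volume.restrict (Set.Ici (0 : ℝ))))) :
    (∀ f : ℝ → ℝ, MemLp f 2 (volume.restrict (Set.Ici (0 : ℝ))) →
      Integrable (fun ts : ℝ × ℝ => f ts.1 * f ts.2 * kernelK0 p ts.1 ts.2)
        ((volume.restrict (Set.Ici (0 : ℝ))).prod (volume.restrict (Set.Ici (0 : ℝ)))) →
      0 ≤ ∫ t in Set.Ici (0 : ℝ), ∫ s in Set.Ici (0 : ℝ), f t * f s * kernelK0 p t s) ∧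
    (∀ (μ : ℝ) (f : ℝ → ℝ), MemLp f 2 (volume.restrict (Set.Ici (0 : ℝ))) →
      ¬ (f =ᵐ[volume.restrict (Set.Ici (0 : ℝ))] 0) →
      (∀ᵐ t ∂(volume.restrict (Set.Ici (0 : ℝ))),
        (∫ s in Set.Ici (0 : ℝ), f s * kernelK0 p t s) = μ * f t) →
      0 ≤ μ) := by
  constructor
  · intro f hf hf_int
    exact KernelK0Aux.key p f hp_meas hf hf_int
  · intro μval f hf hne heig
    set μ := volume.restrict (Set.Ici (0 : ℝ)) with hμ
    set ν := μ.prod μ with hν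
    -- f ⊗ f is in L²(ν)
    have hF2 : MemLp (fun ts : ℝ × ℝ => f ts.1 * f ts.2) 2 ν := by
      have hsm : AEStronglyMeasurable (fun ts : ℝ × ℝ => f ts.1 * f ts.2) ν :=
        (hf.1.comp_fst).mul (hf.1.comp_snd)
      rw [memLp_two_iff_integrable_sq_norm hsm]
      have hI : Integrable (fun ts : ℝ × ℝ => (f ts.1 ^ 2) * (f ts.2 ^ 2)) ν :=
        hf.integrable_sq.mul_prod hf.integrable_sq
      refine hI.congr (Filter.Eventually.of_forall fun ts => ?_)
      show f ts.1 ^ 2 * f ts.2 ^ 2 = ‖f ts.1 * f ts.2‖ ^ 2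
      rw [Real.norm_eq_abs, sq_abs]
      ring
    -- the double integrand is integrable
    have hf_int : Integrable (fun ts : ℝ × ℝ => f ts.1 * f ts.2 * kernelK0 p ts.1 ts.2) ν := by
      have h : MemLp ((fun ts : ℝ × ℝ => f ts.1 * f ts.2) •
          (fun ts : ℝ × ℝ => kernelK0 p ts.1 ts.2)) 1 ν :=
        hk_sq.smul hF2 (hpqr := ⟨by rw [inv_one]; exact ENNReal.inv_two_add_inv_two⟩)
      rw [memLp_one_iff_integrable] at h
      refine h.congr (Filter.Eventually.of_forall fun ts => ?_)
      simp [Pi.smul_apply, smul_eq_mul]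
    have hpos := KernelK0Aux.key p f hp_meas hf hf_int
    -- compute the iterated integral using the eigen-equation
    have hinner : ∀ᵐ t ∂μ, (∫ s in Set.Ici (0 : ℝ), f t * f s * kernelK0 p t s)
        = μval * f t ^ 2 := by
      filter_upwards [heig] with t ht
      have : (∫ s in Set.Ici (0 : ℝ), f t * f s * kernelK0 p t s)
          = f t * ∫ s in Set.Ici (0 : ℝ), f s * kernelK0 p t s := by
        rw [← integral_const_mul]
        refine integral_congr_ae (Filter.Eventually.of_forall fun s => ?_)
        ring
      rw [this, ht]
      ring
    have houter : (∫ t in Set.Ici (0 : ℝ), ∫ s in Set.Ici (0 : ℝ),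
        f t * f s * kernelK0 p t s) = μval * ∫ t in Set.Ici (0 : ℝ), f t ^ 2 := by
      rw [← integral_const_mul]
      exact integral_congr_ae hinner
    -- ∫ f² > 0
    have hsq_int : Integrable (fun t => f t ^ 2) μ := hf.integrable_sq
    have hsq_nonneg : 0 ≤ ∫ t in Set.Ici (0 : ℝ), f t ^ 2 :=
      integral_nonneg fun t => sq_nonneg _
    have hsq_ne : (∫ t in Set.Ici (0 : ℝ), f t ^ 2) ≠ 0 := by
      intro h0
      apply hne
      have := (integral_eq_zero_iff_of_nonneg_ae
        (Filter.Eventually.of_forall fun t => sq_nonneg (f t)) hsq_int).mp h0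
      filter_upwards [this] with t ht
      have : f t ^ 2 = 0 := ht
      simpa [pow_eq_zero_iff] using this
    have hsq_pos : 0 < ∫ t in Set.Ici (0 : ℝ), f t ^ 2 :=
      lt_of_le_of_ne hsq_nonneg (Ne.symm hsq_ne)
    rw [houter] at hpos
    nlinarith
end

section
/- Let Q_c be a compact self-adjoint positive integral operator on L²[0,∞) with ‖Q_c‖ = 1 and kernel k_c(t,s) ≥ 0. For y ≠ 0 define the multiplication operator U f(t) = e^{-iyt/2} f(t) and Q = U Q_c U. Then 1 is not an eigenvalue of Q; hence, since Q is compact, 1 is not in the spectrum of Q. -/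
open MeasureTheory
open scoped ComplexInnerProductSpace


lemma pos_op_norm_sq_le {E : Type*} [NormedAddCommGroup E] [InnerProductSpace ℂ E]
    [CompleteSpace E] (P : E →L[ℂ] E) (hsa : IsSelfAdjoint P)
    (hpos : ∀ f, 0 ≤ (⟪P f, f⟫).re) (hnorm : ‖P‖ = 1) (x : E) :
    ‖P x‖ ^ 2 ≤ (⟪P x, x⟫).re := by
  have h0 := hpos (x - P x)
  have hexp : ⟪P (x - P x), x - P x⟫
      = ⟪P x, x⟫ - ⟪P x, P x⟫ - ⟪P (P x), x⟫ + ⟪P (P x), P x⟫ := by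
    rw [map_sub, inner_sub_left, inner_sub_right, inner_sub_right]; ring
  have hsym : ⟪P (P x), x⟫ = ⟪P x, P x⟫ := hsa.isSymmetric (P x) x
  have h1 : (⟪P x, P x⟫).re = ‖P x‖ ^ 2 := by
    simpa using inner_self_eq_norm_sq (𝕜 := ℂ) (P x)
  have h2 : (⟪P (P x), P x⟫).re ≤ ‖P x‖ ^ 2 := by
    calc (⟪P (P x), P x⟫).re ≤ ‖P (P x)‖ * ‖P x‖ := by simpa using re_inner_le_norm (𝕜 := ℂ) (P (P x)) (P x)
      _ ≤ (‖P‖ * ‖P x‖) * ‖P x‖ := by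
          gcongr; exact P.le_opNorm (P x)
      _ = ‖P x‖ ^ 2 := by rw [hnorm]; ring
  rw [hexp] at h0
  simp only [Complex.add_re, Complex.sub_re] at h0
  rw [hsym] at h0
  linarith [h1 ▸ h0]

local notation "μ" => MeasureTheory.volume.restrict (Set.Ici (0 : ℝ))

lemma norm_exp_I_mul' (z : ℂ) (hz : z.re = 0) : ‖Complex.exp z‖ = 1 := by
  simp [Complex.norm_exp, hz]

lemma re_neg_I_mul (y t : ℝ) : (-Complex.I * y * t / 2).re = 0 := by
  simp [Complex.div_re]

lemma re_I_mul (y t : ℝ) : (Complex.I * y * t / 2).re = 0 := by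
  simp [Complex.div_re]

lemma eig_aux (y : ℝ) (hy : y ≠ 0)
    (Qc U : Lp ℂ 2 μ →L[ℂ] Lp ℂ 2 μ)
    (hsa : IsSelfAdjoint Qc)
    (hpos : ∀ f, 0 ≤ (⟪Qc f, f⟫).re)
    (hnorm : ‖Qc‖ = 1)
    (hU : ∀ f, (U f : ℝ → ℂ) =ᵐ[μ]
      fun t => Complex.exp (-Complex.I * y * t / 2) * f t)
    (f : Lp ℂ 2 μ) (hf : U (Qc (U f)) = f) :
    f = 0 := by
  set g : Lp ℂ 2 μ := U f with hgdef
  set w : Lp ℂ 2 μ := Qc g with hwdef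
  have hg : (g : ℝ → ℂ) =ᵐ[μ] fun t => Complex.exp (-Complex.I * y * t / 2) * f t := hU f
  have hfw : (f : ℝ → ℂ) =ᵐ[μ] fun t => Complex.exp (-Complex.I * y * t / 2) * w t := by
    have h := hU w
    rwa [hf] at h
  have hw : (w : ℝ → ℂ) =ᵐ[μ] fun t => Complex.exp (Complex.I * y * t / 2) * f t := by
    filter_upwards [hfw] with t ht
    rw [ht, ← mul_assoc, ← Complex.exp_add]
    have : Complex.I * y * t / 2 + -Complex.I * y * t / 2 = 0 := by ring
    rw [this, Complex.exp_zero, one_mul]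
  -- norms
  have hnw : ‖w‖ = ‖f‖ := by
    rw [Lp.norm_def, Lp.norm_def]
    congr 1
    apply eLpNorm_congr_norm_ae
    filter_upwards [hw] with t ht
    rw [ht, norm_mul, norm_exp_I_mul' _ (re_I_mul y t), one_mul]
  -- inner product computation
  have hint : ∀ᵐ t ∂μ, (starRingEnd ℂ) (w t) * g t
      = Complex.exp (-Complex.I * y * t) * ((‖(f : ℝ → ℂ) t‖ : ℂ))^2 := by
    filter_upwards [hw, hg] with t h1 h2
    rw [h1, h2, map_mul, ← Complex.exp_conj]
    have hc : (starRingEnd ℂ) (Complex.I * y * t / 2) = -Complex.I * y * t / 2 := by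
      simp [map_div₀, map_ofNat]
    rw [hc]
    have hsplit : Complex.exp (-Complex.I * ↑y * ↑t / 2) * (starRingEnd ℂ) (f t) *
        (Complex.exp (-Complex.I * ↑y * ↑t / 2) * f t)
        = (Complex.exp (-Complex.I * ↑y * ↑t / 2) * Complex.exp (-Complex.I * ↑y * ↑t / 2)) *
          ((starRingEnd ℂ) (f t) * f t) := by ring
    rw [hsplit, ← Complex.exp_add]
    have h4 : -Complex.I * ↑y * ↑t / 2 + -Complex.I * ↑y * ↑t / 2 = -Complex.I * y * t := by ring
    rw [h4, Complex.conj_mul']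
  have hinner : ⟪w, g⟫ = ∫ t, Complex.exp (-Complex.I * y * t) * ((‖(f : ℝ → ℂ) t‖ : ℂ))^2 ∂μ := by
    rw [MeasureTheory.L2.inner_def]
    exact integral_congr_ae (by filter_upwards [hint] with t ht; rw [RCLike.inner_apply', ht])
  -- integrability of |f|^2
  have hfsq : Integrable (fun t => ‖(f : ℝ → ℂ) t‖ ^ 2) μ := by
    refine ((MeasureTheory.L2.integrable_inner (𝕜 := ℂ) f f).re).congr ?_
    filter_upwards with t
    simpa using inner_self_eq_norm_sq (𝕜 := ℂ) ((f : ℝ → ℂ) t)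
  -- real part of the inner product
  have hre : (⟪w, g⟫).re = ∫ t, Real.cos (y * t) * ‖(f : ℝ → ℂ) t‖ ^ 2 ∂μ := by
    rw [hinner]
    have hci : Integrable (fun t : ℝ => Complex.exp (-Complex.I * y * t) *
        ((‖(f : ℝ → ℂ) t‖ : ℂ)) ^ 2) μ :=
      (MeasureTheory.L2.integrable_inner (𝕜 := ℂ) w g).congr
        (by filter_upwards [hint] with t ht; rw [RCLike.inner_apply', ht])
    rw [← RCLike.re_to_complex, ← integral_re hci]
    apply integral_congr_ae
    filter_upwards with t
    have he : -Complex.I * y * t = ((-(y * t) : ℝ) : ℂ) * Complex.I := by push_cast; ring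
    have h2 : ((‖(f : ℝ → ℂ) t‖ : ℂ)) ^ 2 = ((‖(f : ℝ → ℂ) t‖ ^ 2 : ℝ) : ℂ) := by push_cast; ring
    rw [he, h2, mul_comm, RCLike.re_to_complex, Complex.re_ofReal_mul, Complex.exp_ofReal_mul_I_re, Real.cos_neg,
      mul_comm]
  -- ‖f‖² as an integral
  have hnormf : ‖f‖ ^ 2 = ∫ t, ‖(f : ℝ → ℂ) t‖ ^ 2 ∂μ := by
    rw [← inner_self_eq_norm_sq (𝕜 := ℂ) f, MeasureTheory.L2.inner_def,
      ← integral_re (MeasureTheory.L2.integrable_inner (𝕜 := ℂ) f f)]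
    apply integral_congr_ae
    filter_upwards with t
    simpa using inner_self_eq_norm_sq (𝕜 := ℂ) ((f : ℝ → ℂ) t)
  -- key positivity inequality
  have hkey : ‖f‖ ^ 2 ≤ (⟪w, g⟫).re := by
    have h := pos_op_norm_sq_le Qc hsa hpos hnorm g
    rw [← hwdef] at h
    rwa [hnw] at h
  -- integrability of cos · |f|²
  have hcos_int : Integrable (fun t => Real.cos (y * t) * ‖(f : ℝ → ℂ) t‖ ^ 2) μ := by
    refine Integrable.bdd_mul (c := 1) hfsq ?_ (Filter.Eventually.of_forall fun t => by simpa using Real.abs_cos_le_one (y * t))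
    exact (Real.continuous_cos.comp (continuous_const.mul continuous_id)).aestronglyMeasurable
  have hsubint : Integrable (fun t => (1 - Real.cos (y * t)) * ‖(f : ℝ → ℂ) t‖ ^ 2) μ := by
    refine (hfsq.sub hcos_int).congr ?_
    filter_upwards with t
    simp only [Pi.sub_apply]
    ring
  have hval : ∫ t, (1 - Real.cos (y * t)) * ‖(f : ℝ → ℂ) t‖ ^ 2 ∂μ
      = ‖f‖ ^ 2 - (⟪w, g⟫).re := by
    rw [hnormf, hre, ← integral_sub hfsq hcos_int]
    apply integral_congr_ae
    filter_upwards with t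
    ring
  have hnonneg : 0 ≤ᵐ[μ] fun t => (1 - Real.cos (y * t)) * ‖(f : ℝ → ℂ) t‖ ^ 2 := by
    filter_upwards with t
    exact mul_nonneg (by nlinarith [Real.cos_le_one (y * t)]) (sq_nonneg _)
  have hzero : (fun t => (1 - Real.cos (y * t)) * ‖(f : ℝ → ℂ) t‖ ^ 2) =ᵐ[μ] 0 := by
    refine (integral_eq_zero_iff_of_nonneg_ae hnonneg hsubint).mp ?_
    refine le_antisymm (by rw [hval]; linarith) (integral_nonneg_of_ae hnonneg)
  have hcosne : ∀ᵐ t ∂μ, Real.cos (y * t) ≠ 1 := by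
    have hsubset : {t : ℝ | Real.cos (y * t) = 1}
        ⊆ Set.range (fun n : ℤ => (n : ℝ) * (2 * Real.pi) / y) := by
      intro t ht
      obtain ⟨n, hn⟩ := (Real.cos_eq_one_iff _).mp ht
      refine ⟨n, ?_⟩
      show (n : ℝ) * (2 * Real.pi) / y = t
      rw [hn, mul_comm y t, mul_div_assoc, div_self hy, mul_one]
    have hvol : volume {t : ℝ | Real.cos (y * t) = 1} = 0 :=
      measure_mono_null hsubset ((Set.countable_range _).measure_zero _)
    have hμ0 : μ {t : ℝ | Real.cos (y * t) = 1} = 0 :=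
      le_antisymm ((Measure.restrict_apply_le _ _).trans hvol.le) zero_le
    rw [ae_iff]
    simpa [not_not] using hμ0
  have hf0 : (f : ℝ → ℂ) =ᵐ[μ] 0 := by
    filter_upwards [hzero, hcosne] with t h1 h2
    simp only [Pi.zero_apply] at h1 ⊢
    rcases mul_eq_zero.mp h1 with h | h
    · exact absurd (by linarith [sub_eq_zero.mp h] : Real.cos (y * t) = 1) h2
    · simpa using pow_eq_zero_iff (n := 2) (by norm_num) |>.mp h
  exact Lp.eq_zero_iff_ae_eq_zero.mpr hf0


set_option maxHeartbeats 1000000 in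
open ContinuousLinearMap in
/-- Let `Q_c` be a compact self-adjoint positive operator on `L²[0,∞)` with `‖Q_c‖ = 1`,
and for `y ≠ 0` let `U` be the unitary multiplication operator by `e^{-iyt/2}`. Then
`Q = U Q_c U` does not have 1 as an eigenvalue, and 1 is not in the spectrum of `Q`. -/
theorem one_not_in_spectrum_twisted
    (Qc : Lp ℂ 2 (volume.restrict (Set.Ici (0 : ℝ))) →L[ℂ]
      Lp ℂ 2 (volume.restrict (Set.Ici (0 : ℝ))))
    (hcompact : IsCompactOperator Qc)
    (hsa : IsSelfAdjoint Qc)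
    (hpos : ∀ f, 0 ≤ (⟪Qc f, f⟫).re)
    (hnorm : ‖Qc‖ = 1)
    (y : ℝ) (hy : y ≠ 0)
    (U : Lp ℂ 2 (volume.restrict (Set.Ici (0 : ℝ))) →L[ℂ]
      Lp ℂ 2 (volume.restrict (Set.Ici (0 : ℝ))))
    (hU : ∀ f, (U f : ℝ → ℂ) =ᵐ[volume.restrict (Set.Ici (0 : ℝ))]
      fun t => Complex.exp (-Complex.I * y * t / 2) * f t) :
    (∀ f, (U.comp (Qc.comp U)) f = f → f = 0) ∧
    (1 : ℂ) ∉ spectrum ℂ (U.comp (Qc.comp U)) := by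
  have part1 : ∀ f, (U.comp (Qc.comp U)) f = f → f = 0 := fun f hf =>
    eig_aux y hy Qc U hsa hpos hnorm hU f hf
  refine ⟨part1, ?_⟩
  set T : Lp ℂ 2 μ →L[ℂ] Lp ℂ 2 μ := U.comp (Qc.comp U) with hTdef
  -- the adjoint of U is multiplication by exp(I y t / 2)
  have hUadj : ∀ f : Lp ℂ 2 μ, ((ContinuousLinearMap.adjoint U) f : ℝ → ℂ) =ᵐ[μ]
      fun t => Complex.exp (-Complex.I * (-y : ℝ) * t / 2) * f t := by
    intro f
    have hcont : Continuous (fun t : ℝ => Complex.exp (-Complex.I * (-y : ℝ) * t / 2)) := by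
      apply Complex.continuous_exp.comp
      exact ((continuous_const.mul Complex.continuous_ofReal).div_const 2)
    have hmeas : AEStronglyMeasurable
        (fun t : ℝ => Complex.exp (-Complex.I * (-y : ℝ) * t / 2) * f t) μ :=
      hcont.aestronglyMeasurable.mul (Lp.aestronglyMeasurable f)
    have hre0 : ∀ t : ℝ, (-Complex.I * ((-y : ℝ) : ℂ) * t / 2).re = 0 := fun t => by
      simp [Complex.div_re]
    have hsn : eLpNorm (fun t : ℝ => Complex.exp (-Complex.I * (-y : ℝ) * t / 2) * f t) 2 μ
        = eLpNorm (f : ℝ → ℂ) 2 μ := by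
      apply eLpNorm_congr_norm_ae
      filter_upwards with t
      rw [norm_mul, norm_exp_I_mul' _ (hre0 t), one_mul]
    have hmem : MemLp (fun t : ℝ => Complex.exp (-Complex.I * (-y : ℝ) * t / 2) * f t) 2 μ :=
      ⟨hmeas, by rw [hsn]; exact (Lp.memLp f).2⟩
    have hadj : (ContinuousLinearMap.adjoint U) f = hmem.toLp _ := by
      apply ext_inner_right ℂ
      intro v
      rw [ContinuousLinearMap.adjoint_inner_left, MeasureTheory.L2.inner_def,
        MeasureTheory.L2.inner_def]
      apply integral_congr_ae
      filter_upwards [hU v, hmem.coeFn_toLp] with t h1 h2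
      simp only [RCLike.inner_apply]
      rw [h1, h2, map_mul]
      have hc : (starRingEnd ℂ) (Complex.exp (-Complex.I * ((-y : ℝ) : ℂ) * t / 2))
          = Complex.exp (-Complex.I * y * t / 2) := by
        rw [← Complex.exp_conj]
        have : (starRingEnd ℂ) (-Complex.I * ((-y : ℝ) : ℂ) * ↑t / 2)
            = -Complex.I * (y : ℂ) * t / 2 := by
          rw [map_div₀, map_mul, map_mul, map_neg, Complex.conj_I, Complex.conj_ofReal,
            Complex.conj_ofReal, map_ofNat]
          push_cast
          ring
        rw [this]
      rw [hc]
      ring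
    rw [hadj]
    exact hmem.coeFn_toLp
  have part1' : ∀ f, (ContinuousLinearMap.adjoint T) f = f → f = 0 := by
    intro f hf
    have hTadj : ContinuousLinearMap.adjoint T
        = (ContinuousLinearMap.adjoint U).comp (Qc.comp (ContinuousLinearMap.adjoint U)) := by
      rw [hTdef, ContinuousLinearMap.adjoint_comp, ContinuousLinearMap.adjoint_comp,
        hsa.adjoint_eq, ContinuousLinearMap.comp_assoc]
    rw [hTadj] at hf
    exact eig_aux (-y) (neg_ne_zero.mpr hy) Qc _ hsa hpos hnorm hUadj f hf
  -- T is a compact operator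
  have hTc : IsCompactOperator (T : Lp ℂ 2 μ →L[ℂ] Lp ℂ 2 μ) := by
    have h1 : IsCompactOperator (Qc.comp U) := hcompact.comp_clm U
    have h2 : IsCompactOperator (U.comp (Qc.comp U)) := by
      have := h1.clm_comp U
      simpa [ContinuousLinearMap.coe_comp'] using this
    exact h2
  set S : Lp ℂ 2 μ →L[ℂ] Lp ℂ 2 μ := 1 - T with hSdef
  have hSappl : ∀ x, S x = x - T x := fun x => rfl
  -- S is bounded below
  have hbb : ∃ c : ℝ, 0 < c ∧ ∀ x, c * ‖x‖ ≤ ‖S x‖ := by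
    by_contra hcon
    push_neg at hcon
    have hseq : ∀ n : ℕ, ∃ u : Lp ℂ 2 μ, ‖u‖ = 1 ∧ ‖S u‖ < 1 / (n + 1) := by
      intro n
      obtain ⟨x, hx⟩ := hcon (1 / (n + 1)) (by positivity)
      have hx0 : x ≠ 0 := by
        rintro rfl
        simp at hx
      have hnx : (0 : ℝ) < ‖x‖ := norm_pos_iff.mpr hx0
      refine ⟨‖x‖⁻¹ • x, ?_, ?_⟩
      · rw [norm_smul, norm_inv, norm_norm, inv_mul_cancel₀ hnx.ne']
      · rw [ContinuousLinearMap.map_smul_of_tower, norm_smul, norm_inv, norm_norm]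
        calc ‖x‖⁻¹ * ‖S x‖ < ‖x‖⁻¹ * (1 / (n + 1) * ‖x‖) :=
              mul_lt_mul_of_pos_left hx (inv_pos.mpr hnx)
          _ = 1 / (n + 1) := by field_simp
    choose u hu1 hu2 using hseq
    obtain ⟨K, hK, hKsub⟩ := hTc.image_subset_compact_of_bounded
      (Metric.isBounded_closedBall (x := (0 : Lp ℂ 2 μ)) (r := 1))
    have hmemK : ∀ n, T (u n) ∈ K := fun n =>
      hKsub ⟨u n, by simp [Metric.mem_closedBall, hu1 n], rfl⟩
    obtain ⟨a, _, φ, hφ, hconv⟩ := hK.tendsto_subseq hmemK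
    have hS0 : Filter.Tendsto (fun n => S (u (φ n))) Filter.atTop (nhds 0) := by
      rw [tendsto_zero_iff_norm_tendsto_zero]
      apply squeeze_zero (fun n => norm_nonneg _) (fun n => (hu2 (φ n)).le)
      have h1 : Filter.Tendsto (fun n : ℕ => 1 / ((n : ℝ) + 1)) Filter.atTop (nhds 0) :=
        tendsto_one_div_add_atTop_nhds_zero_nat
      exact h1.comp hφ.tendsto_atTop
    have huconv : Filter.Tendsto (fun n => u (φ n)) Filter.atTop (nhds a) := by
      have heq : (fun n => u (φ n)) = fun n => T (u (φ n)) + S (u (φ n)) := by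
        funext n
        rw [hSappl]
        abel
      rw [heq]
      simpa using hconv.add hS0
    have hTa : T a = a := by
      have h1 : Filter.Tendsto (fun n => T (u (φ n))) Filter.atTop (nhds (T a)) :=
        (T.continuous.tendsto a).comp huconv
      exact tendsto_nhds_unique h1 hconv
    have ha0 : a = 0 := part1 a hTa
    have hna : ‖a‖ = 1 := by
      have h1 : Filter.Tendsto (fun n => ‖u (φ n)‖) Filter.atTop (nhds ‖a‖) :=
        (continuous_norm.tendsto a).comp huconv
      have h2 : (fun n => ‖u (φ n)‖) = fun _ => (1 : ℝ) := funext fun n => hu1 (φ n)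
      rw [h2] at h1
      exact (tendsto_const_nhds_iff.mp h1).symm
    rw [ha0] at hna
    simp at hna
  obtain ⟨c, hc0, hc⟩ := hbb
  have hanti : AntilipschitzWith (⟨c, hc0.le⟩ : NNReal)⁻¹ S := by
    apply ContinuousLinearMap.antilipschitz_of_bound
    intro x
    show ‖x‖ ≤ c⁻¹ * ‖S x‖
    calc ‖x‖ = c⁻¹ * (c * ‖x‖) := by field_simp
      _ ≤ c⁻¹ * ‖S x‖ := mul_le_mul_of_nonneg_left (hc x) (inv_nonneg.mpr hc0.le)
      _ = (⟨c, hc0.le⟩ : NNReal)⁻¹ * ‖S x‖ := by norm_num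
  have hclosed : IsClosed (Set.range S) := hanti.isClosed_range S.uniformContinuous
  have hker : S.ker = ⊥ := by
    rw [LinearMap.ker_eq_bot']
    intro x hx
    apply part1 x
    have := hSappl x
    rw [show S x = 0 from hx] at this
    exact (sub_eq_zero.mp this.symm).symm
  have horth : (S.range)ᗮ = ⊥ := by
    rw [Submodule.eq_bot_iff]
    intro x hx
    have hx' := (Submodule.mem_orthogonal _ x).mp hx
    have hadj0 : (ContinuousLinearMap.adjoint S) x = 0 := by
      apply ext_inner_right ℂ
      intro v
      rw [ContinuousLinearMap.adjoint_inner_left, inner_zero_left]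
      have h1 := hx' (S v) (LinearMap.mem_range_self _ v)
      rw [← inner_conj_symm, h1, map_zero]
    have hadjS : ContinuousLinearMap.adjoint S = 1 - ContinuousLinearMap.adjoint T := by
      have hid : ContinuousLinearMap.adjoint
          (1 : Lp ℂ 2 μ →L[ℂ] Lp ℂ 2 μ) = 1 :=
        (IsSelfAdjoint.one (R := Lp ℂ 2 μ →L[ℂ] Lp ℂ 2 μ)).adjoint_eq
      rw [hSdef, map_sub, hid]
    rw [hadjS] at hadj0
    have h2 : (ContinuousLinearMap.adjoint T) x = x := by
      have h3 : x - (ContinuousLinearMap.adjoint T) x = 0 := hadj0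
      exact (sub_eq_zero.mp h3).symm
    exact part1' x h2
  have hrange : S.range = ⊤ := by
    have h1 : (S.range).topologicalClosure = ⊤ := by
      rw [← Submodule.orthogonal_orthogonal_eq_closure, horth, Submodule.bot_orthogonal_eq_top]
    have h2 : (S.range).topologicalClosure ≤ S.range := by
      refine Submodule.topologicalClosure_minimal _ le_rfl ?_
      have : ((S.range : Submodule ℂ (Lp ℂ 2 μ)) : Set (Lp ℂ 2 μ)) = Set.range S := by
        ext z
        simp [LinearMap.mem_range]
      rw [this]
      exact hclosed
    exact top_le_iff.mp (h1 ▸ h2)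
  have hunit : IsUnit S := by
    let e := ContinuousLinearEquiv.ofBijective S hker hrange
    have he : ∀ z, e z = S z := fun z =>
      congrFun (ContinuousLinearEquiv.coeFn_ofBijective S hker hrange) z
    refine ⟨⟨S, (e.symm : Lp ℂ 2 μ →L[ℂ] Lp ℂ 2 μ), ?_, ?_⟩, rfl⟩
    · refine ContinuousLinearMap.ext fun x => ?_
      show S (e.symm x) = x
      rw [← he]
      exact e.apply_symm_apply x
    · refine ContinuousLinearMap.ext fun x => ?_
      show e.symm (S x) = x
      rw [← he]
      exact e.symm_apply_apply x
  rw [spectrum.notMem_iff, map_one, ← hSdef]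
  exact hunit
end
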